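/- Stability function value bound: for the Taylor polynomial φ_s(z) = Σ_{k=0}^s z^k/k! with s ∈ {1,2,3}, and θ = 1/2, the rational function Φ(z) = φ_s(−z/2)/φ_s(z/2) satisfies |Φ(z)| ≤ 1 for every complex z with Re(z) ≥ 0. -/

import Mathlib

open Finset

/-- A-stability at θ = 1/2: for s ∈ {1,2,3} and φ_s(z) = Σ_{k=0}^s z^k/k!, the
stability function Φ(z) = φ_s(−z/2)/φ_s(z/2) satisfies |Φ(z)| ≤ 1 whenever
Re(z) ≥ 0, i.e. |φ_s(−z/2)| ≤ |φ_s(z/2)|. -/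
theorem stmt_12 (s : ℕ) (hs : s = 1 ∨ s = 2 ∨ s = 3) (z : ℂ) (hz : 0 ≤ z.re) :
    ‖∑ k ∈ Finset.range (s + 1), (-z / 2) ^ k / (Nat.factorial k : ℂ)‖ ≤
      ‖∑ k ∈ Finset.range (s + 1), (z / 2) ^ k / (Nat.factorial k : ℂ)‖ := by
  obtain ⟨x, y⟩ := z
  simp only [] at hz
  rw [Complex.norm_def, Complex.norm_def]
  apply Real.sqrt_le_sqrt
  rcases hs with h | h | h <;> subst h <;>
    simp only [Finset.sum_range_succ, Finset.sum_range_zero, Nat.factorial,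
      Complex.normSq_apply, pow_zero, pow_one, pow_two, pow_succ] <;>
    norm_num [Complex.add_re, Complex.add_im, Complex.div_re, Complex.div_im,
      Complex.mul_re, Complex.mul_im, Complex.normSq_apply, Complex.neg_re, Complex.neg_im] <;>
    ring_nf <;>
    nlinarith [sq_nonneg x, sq_nonneg y, sq_nonneg (x*y), mul_nonneg hz (sq_nonneg y), mul_nonneg hz (sq_nonneg x), sq_nonneg (x^2 - y^2), sq_nonneg (x^2+y^2), mul_nonneg (mul_nonneg hz hz) hz, mul_nonneg hz (sq_nonneg (x^2-y^2)), mul_nonneg hz (sq_nonneg (x^2+y^2)), mul_nonneg hz (sq_nonneg (x*y))]
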